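/- Let R = q^{2A} with A ∈ ℕ, A ≥ 1, let I ⊂ ℤ_q be an interval of length R^{-1/2}, let a ∈ I, and let T := {(x,y) ∈ ℚ_q² : |x + 2ay| ≤ R^{1/2}, |y| ≤ R}; write 𝕋(I) for the (pairwise disjoint) collection of translates of T, which tile ℚ_q². Let f : ℚ_q² → ℂ be a Schwartz function whose Fourier transform vanishes outside {(ξ,η) ∈ ℚ_q² : ξ ∈ I, |η − ξ²| ≤ 1/R}. Then there exist nonnegative real constants c_T, one for each translate T' ∈ 𝕋(I), such that |f(x)| = ∑_{T' ∈ 𝕋(I)} c_{T'} 1_{T'}(x) for every x ∈ ℚ_q², and consequently ∫_{ℚ_q²} |f|² dμ² = ∑_{T' ∈ 𝕋(I)} c_{T'}² μ²(T'). -/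

import Mathlib

open MeasureTheory

noncomputable instance (q : ℕ) [Fact q.Prime] : MeasurableSpace ℚ_[q] := borel _
instance (q : ℕ) [Fact q.Prime] : BorelSpace ℚ_[q] := ⟨rfl⟩

/-- The Fourier transform on `ℚ_q²` with respect to the additive character `χ`
and the Haar measure `μ`. -/
noncomputable def qpFourier (q : ℕ) [Fact q.Prime] (μ : Measure ℚ_[q]) [SigmaFinite μ]
    (χ : ℚ_[q] → ℂ) (F : ℚ_[q] × ℚ_[q] → ℂ) (ξη : ℚ_[q] × ℚ_[q]) : ℂ :=
  ∫ x, F x * χ (-(ξη.1 * x.1 + ξη.2 * x.2)) ∂(μ.prod μ)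

/-- The translate `v + T` of `T = {(x,y) : |x + 2ay| ≤ q^A, |y| ≤ q^{2A}}`. -/
def translateT (q : ℕ) [Fact q.Prime] (A : ℕ) (a : ℚ_[q]) (v : ℚ_[q] × ℚ_[q]) :
    Set (ℚ_[q] × ℚ_[q]) :=
  {w : ℚ_[q] × ℚ_[q] |
    ‖(w - v).1 + 2 * a * (w - v).2‖ ≤ (q : ℝ) ^ (A : ℤ) ∧
    ‖(w - v).2‖ ≤ (q : ℝ) ^ ((2 * A : ℕ) : ℤ)}

section aux
variable {q : ℕ} [Fact q.Prime] {χ : ℚ_[q] → ℂ}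

lemma padic_nonarch (x y : ℚ_[q]) : ‖x + y‖ ≤ max ‖x‖ ‖y‖ := Padic.nonarchimedean x y

lemma chi_sub (hχ_mul : ∀ x y : ℚ_[q], χ (x + y) = χ x * χ y)
    (hχ_triv : ∀ x : ℚ_[q], ‖x‖ ≤ 1 → χ x = 1) {s t : ℚ_[q]} (h : ‖s - t‖ ≤ 1) :
    χ s = χ t := by
  have : χ s = χ (t + (s - t)) := by ring_nf
  rw [this, hχ_mul, hχ_triv _ h, mul_one]

lemma chi_cont (hχ_mul : ∀ x y : ℚ_[q], χ (x + y) = χ x * χ y)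
    (hχ_triv : ∀ x : ℚ_[q], ‖x‖ ≤ 1 → χ x = 1) : Continuous χ := by
  rw [continuous_iff_continuousAt]
  intro x
  have : ∀ᶠ y in nhds x, χ y = χ x := by
    have : Metric.closedBall x 1 ∈ nhds x := Metric.closedBall_mem_nhds x one_pos
    filter_upwards [this] with y hy
    exact chi_sub hχ_mul hχ_triv (by simpa [dist_eq_norm] using hy)
  exact ContinuousAt.congr continuousAt_const (Filter.EventuallyEq.symm this)
end aux

section aux2
variable {q : ℕ} [Fact q.Prime] {χ : ℚ_[q] → ℂ}

def Bq (q : ℕ) [Fact q.Prime] (n : ℤ) : Set ℚ_[q] := {x : ℚ_[q] | ‖x‖ ≤ (q:ℝ)^n}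

lemma hq1 : (1:ℝ) < q := by exact_mod_cast (Fact.out : q.Prime).one_lt

lemma isOpen_Bq (n : ℤ) : IsOpen (Bq q n) := by
  have : Bq q n = {x : ℚ_[q] | ‖x‖ < (q:ℝ)^(n+1)} := by
    ext x; exact Padic.norm_le_pow_iff_norm_lt_pow_add_one x n
  rw [this]
  exact isOpen_lt continuous_norm continuous_const

lemma isClosed_Bq (n : ℤ) : IsClosed (Bq q n) :=
  isClosed_le continuous_norm continuous_const

lemma isCompact_Bq (n : ℤ) : IsCompact (Bq q n) := by
  have : Bq q n = Metric.closedBall (0:ℚ_[q]) ((q:ℝ)^n) := by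
    ext x; simp [Bq, Metric.mem_closedBall, dist_eq_norm]
  rw [this]; exact isCompact_closedBall _ _

lemma measurableSet_Bq (n : ℤ) : MeasurableSet (Bq q n) := (isClosed_Bq n).measurableSet

lemma mem_Bq_add {n : ℤ} {x y : ℚ_[q]} (hx : x ∈ Bq q n) (hy : y ∈ Bq q n) :
    x + y ∈ Bq q n := le_trans (Padic.nonarchimedean x y) (max_le hx hy)

lemma integral_char_ball (μ : Measure ℚ_[q]) [μ.IsAddHaarMeasure] [SigmaFinite μ]
    (hχ_mul : ∀ x y : ℚ_[q], χ (x + y) = χ x * χ y)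
    (hχ_triv : ∀ x : ℚ_[q], ‖x‖ ≤ 1 → χ x = 1)
    (hχ_nontriv : ∃ x : ℚ_[q], ‖x‖ ≤ (q : ℝ) ∧ χ x ≠ 1)
    (n : ℤ) (u : ℚ_[q]) :
    ∫ ξ in Bq q n, χ (ξ * u) ∂μ =
      if ‖u‖ ≤ (q:ℝ)^(-n) then ((μ (Bq q n)).toReal : ℂ) else 0 := by
  by_cases hu : ‖u‖ ≤ (q:ℝ)^(-n)
  · rw [if_pos hu]
    have : ∀ ξ ∈ Bq q n, χ (ξ * u) = 1 := by
      intro ξ hξ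
      apply hχ_triv
      rw [norm_mul]
      have hq0 : (0:ℝ) < q := lt_trans one_pos hq1
      calc ‖ξ‖ * ‖u‖ ≤ (q:ℝ)^n * (q:ℝ)^(-n) :=
            mul_le_mul hξ hu (norm_nonneg u) (le_of_lt (zpow_pos hq0 n))
        _ = 1 := by rw [← zpow_add₀ (ne_of_gt hq0)]; simp
    rw [setIntegral_congr_fun (measurableSet_Bq n) this]
    simp [setIntegral_const, Measure.real]
  · rw [if_neg hu]
    obtain ⟨x₀, hx₀_le, hx₀_ne⟩ := hχ_nontriv
    have hu0 : u ≠ 0 := by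
      rintro rfl
      exact hu (by simp; positivity)
    have hu_ge : (q:ℝ)^(-n+1) ≤ ‖u‖ := by
      by_contra h
      exact hu ((Padic.norm_le_pow_iff_norm_lt_pow_add_one u (-n)).mpr (lt_of_not_ge h))
    set ξ₀ : ℚ_[q] := x₀ * u⁻¹ with hξ₀
    have hξ₀_mem : ξ₀ ∈ Bq q n := by
      have h1 : ‖ξ₀‖ = ‖x₀‖ * ‖u‖⁻¹ := by rw [hξ₀, norm_mul, norm_inv]
      have hupos : (0:ℝ) < ‖u‖ := norm_pos_iff.mpr hu0
      have hq0 : (0:ℝ) < q := lt_trans one_pos hq1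
      have : ‖x₀‖ * ‖u‖⁻¹ ≤ (q:ℝ) * ((q:ℝ)^(-n+1))⁻¹ := by
        apply mul_le_mul hx₀_le _ (by positivity) (le_of_lt hq0)
        exact inv_anti₀ (zpow_pos hq0 _) hu_ge
      rw [Bq, Set.mem_setOf_eq, h1]
      refine le_trans this (le_of_eq ?_)
      calc (q:ℝ) * ((q:ℝ)^(-n+1))⁻¹ = (q:ℝ)^(1:ℤ) * (q:ℝ)^(n-1) := by
            rw [zpow_one, ← zpow_neg]; congr 1; ring
        _ = (q:ℝ)^n := by rw [← zpow_add₀ (ne_of_gt hq0)]; congr 1; ring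
    have hχξ₀u : χ (ξ₀ * u) ≠ 1 := by
      rw [hξ₀, mul_assoc, inv_mul_cancel₀ hu0, mul_one]; exact hx₀_ne
    have key : ∀ ξ : ℚ_[q],
        (Bq q n).indicator (fun ξ => χ (ξ * u)) (ξ + ξ₀)
          = χ (ξ₀ * u) * (Bq q n).indicator (fun ξ => χ (ξ * u)) ξ := by
      intro ξ
      by_cases hξ : ξ ∈ Bq q n
      · rw [Set.indicator_of_mem (mem_Bq_add hξ hξ₀_mem), Set.indicator_of_mem hξ]
        rw [add_mul, hχ_mul, mul_comm]
      · have : ξ + ξ₀ ∉ Bq q n := by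
          intro h
          apply hξ
          have hneg : -ξ₀ ∈ Bq q n := by simpa [Bq] using hξ₀_mem
          have := mem_Bq_add h hneg
          simpa using this
        rw [Set.indicator_of_notMem this, Set.indicator_of_notMem hξ, mul_zero]
    have hI : ∫ ξ, (Bq q n).indicator (fun ξ => χ (ξ * u)) ξ ∂μ
        = χ (ξ₀ * u) * ∫ ξ, (Bq q n).indicator (fun ξ => χ (ξ * u)) ξ ∂μ := by
      conv_lhs => rw [← integral_add_right_eq_self (fun ξ => (Bq q n).indicator (fun ξ => χ (ξ * u)) ξ) ξ₀]
      simp_rw [key]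
      rw [integral_const_mul]
    have h2 : (χ (ξ₀ * u) - 1) * ∫ ξ, (Bq q n).indicator (fun ξ => χ (ξ * u)) ξ ∂μ = 0 := by
      linear_combination -hI
    rcases mul_eq_zero.mp h2 with h | h
    · exact absurd (sub_eq_zero.mp h) hχξ₀u
    · rw [← integral_indicator (measurableSet_Bq n)]; exact h
end aux2
section aux3
variable {q : ℕ} [Fact q.Prime]

lemma qdist_ultra (x y z : ℚ_[q]) : dist x z ≤ max (dist x y) (dist y z) := by
  simp only [dist_eq_norm]
  have h : x - z = (x - y) + (y - z) := by ring
  rw [h]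
  exact Padic.nonarchimedean _ _

lemma pdist_ultra (a b c : ℚ_[q] × ℚ_[q]) : dist a c ≤ max (dist a b) (dist b c) := by
  rw [Prod.dist_eq, Prod.dist_eq, Prod.dist_eq, max_le_iff]
  constructor
  · exact le_trans (qdist_ultra a.1 b.1 c.1)
      (max_le_max (le_max_left _ _) (le_max_left _ _))
  · exact le_trans (qdist_ultra a.2 b.2 c.2)
      (max_le_max (le_max_right _ _) (le_max_right _ _))

lemma unif_loc_const {g : ℚ_[q] × ℚ_[q] → ℂ} (hg : IsLocallyConstant g)
    (hsupp : HasCompactSupport g) :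
    ∃ m : ℕ, ∀ x y : ℚ_[q] × ℚ_[q], dist y x ≤ (q:ℝ)^(-(m:ℤ)) → g y = g x := by
  have hq1 : (1:ℝ) < q := by exact_mod_cast (Fact.out : q.Prime).one_lt
  set K := tsupport g with hK
  -- choose radii
  have hrad : ∀ x : ℚ_[q] × ℚ_[q], ∃ r : ℝ, 0 < r ∧ Metric.ball x r ⊆ {y | g y = g x} := by
    intro x
    have hopen : IsOpen (g ⁻¹' {g x}) := hg {g x}
    obtain ⟨r, hr, hball⟩ := Metric.isOpen_iff.mp hopen x (by simp)
    exact ⟨r, hr, fun y hy => hball hy⟩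
  choose r hr hrsub using hrad
  have hcover : K ⊆ ⋃ x ∈ K, Metric.ball x (r x) := by
    intro x hx
    exact Set.mem_biUnion hx (Metric.mem_ball_self (hr x))
  obtain ⟨t, ht⟩ := hsupp.elim_finite_subcover (fun x : K => Metric.ball (x:ℚ_[q]×ℚ_[q]) (r x))
    (fun x => Metric.isOpen_ball) (by
      intro x hx
      obtain ⟨y, hy, hmem⟩ := Set.mem_iUnion₂.mp (hcover hx)
      exact Set.mem_iUnion.mpr ⟨⟨y, hy⟩, hmem⟩)
  by_cases hne : t.Nonempty
  · set δ := t.inf' hne (fun x => r x) with hδ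
    have hδpos : 0 < δ := by
      rw [hδ, Finset.lt_inf'_iff]
      exact fun x _ => hr x
    obtain ⟨m, hm⟩ := exists_pow_lt_of_lt_one hδpos
      (by rw [inv_lt_one_iff₀]; right; exact hq1 : (q:ℝ)⁻¹ < 1)
    refine ⟨m, fun x y hdist => ?_⟩
    have hsmall : (q:ℝ)^(-(m:ℤ)) < δ := by
      rwa [zpow_neg, zpow_natCast, ← inv_pow]
    have key : ∀ x y : ℚ_[q] × ℚ_[q], dist y x ≤ (q:ℝ)^(-(m:ℤ)) →
        x ∈ K → g y = g x := by
      intro x y hdist hxK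
      obtain ⟨z, hz⟩ := Set.mem_iUnion.mp (ht hxK)
      simp only [Set.mem_iUnion] at hz
      obtain ⟨hzt, hxz⟩ := hz
      have hrz : δ ≤ r z := Finset.inf'_le _ hzt
      have hyz : y ∈ Metric.ball (z:ℚ_[q]×ℚ_[q]) (r z) := by
        rw [Metric.mem_ball]
        calc dist y (z:ℚ_[q]×ℚ_[q]) ≤ max (dist y x) (dist x z) := pdist_ultra _ _ _
          _ < r z := max_lt (lt_of_le_of_lt hdist (lt_of_lt_of_le hsmall hrz)) hxz
      rw [hrsub z hyz, hrsub z hxz]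
    by_cases hxK : x ∈ K
    · exact key x y hdist hxK
    · by_cases hyK : y ∈ K
      · exact (key y x (by rwa [dist_comm]) hyK).symm
      · rw [image_eq_zero_of_notMem_tsupport hxK, image_eq_zero_of_notMem_tsupport hyK]
  · -- K covered by empty union : g ≡ 0
    rw [Finset.not_nonempty_iff_eq_empty] at hne
    refine ⟨0, fun x y _ => ?_⟩
    have hKempty : K = ∅ := by
      rw [hne] at ht
      simpa using ht
    have hx0 : g x = 0 := image_eq_zero_of_notMem_tsupport (by rw [← hK, hKempty]; exact Set.notMem_empty x)
    have hy0 : g y = 0 := image_eq_zero_of_notMem_tsupport (by rw [← hK, hKempty]; exact Set.notMem_empty y)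
    rw [hx0, hy0]
end aux3

section aux4
variable {q : ℕ} [Fact q.Prime] {χ : ℚ_[q] → ℂ}

lemma cont_indicator_one {X : Type*} [TopologicalSpace X] {S : Set X} (hS : IsClopen S) :
    Continuous (S.indicator (fun _ => (1:ℂ))) := by
  rw [continuous_iff_continuousAt]
  intro x
  by_cases hx : x ∈ S
  · refine ContinuousAt.congr (continuousAt_const (y := (1:ℂ))) ?_
    filter_upwards [hS.2.mem_nhds hx] with y hy
    simp [Set.indicator_of_mem hy]
  · refine ContinuousAt.congr (continuousAt_const (y := (0:ℂ))) ?_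
    filter_upwards [hS.1.isOpen_compl.mem_nhds hx] with y hy
    simp [Set.indicator_of_notMem (α := X) hy]

lemma fourier_injective (μ : Measure ℚ_[q]) [μ.IsAddHaarMeasure] [SigmaFinite μ]
    (hχ_mul : ∀ x y : ℚ_[q], χ (x + y) = χ x * χ y)
    (hχ_triv : ∀ x : ℚ_[q], ‖x‖ ≤ 1 → χ x = 1)
    (hχ_nontriv : ∃ x : ℚ_[q], ‖x‖ ≤ (q : ℝ) ∧ χ x ≠ 1)
    {g : ℚ_[q] × ℚ_[q] → ℂ} (hg : IsLocallyConstant g) (hsupp : HasCompactSupport g)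
    (h0 : ∀ p, qpFourier q μ χ g p = 0) : ∀ x, g x = 0 := by
  intro x
  obtain ⟨m, hm⟩ := unif_loc_const hg hsupp
  set ν := μ.prod μ with hν
  set S : Set (ℚ_[q] × ℚ_[q]) := (Bq q m) ×ˢ (Bq q m) with hS
  have hSclopen : IsClopen S :=
    ⟨(isClosed_Bq (q := q) m).prod (isClosed_Bq m), (isOpen_Bq (q := q) m).prod (isOpen_Bq m)⟩
  have hSmeas : MeasurableSet S := hSclopen.1.measurableSet
  have hScompact : IsCompact S := (isCompact_Bq (q := q) m).prod (isCompact_Bq m)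
  have hχcont : Continuous χ := chi_cont hχ_mul hχ_triv
  have hgcont : Continuous g := hg.continuous
  set F : (ℚ_[q] × ℚ_[q]) → (ℚ_[q] × ℚ_[q]) → ℂ := fun p y =>
    S.indicator (fun _ => (1:ℂ)) p * (g y * χ (p.1 * (y.1 - x.1) + p.2 * (y.2 - x.2))) with hF
  -- Integrability on the product
  have hFcont : Continuous (Function.uncurry F) := by
    apply Continuous.mul
    · exact (cont_indicator_one hSclopen).comp continuous_fst
    · apply Continuous.mul
      · exact hgcont.comp continuous_snd
      · apply hχcont.comp
        fun_prop
  have hFsupp : HasCompactSupport (Function.uncurry F) := by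
    apply HasCompactSupport.intro (hScompact.prod hsupp)
    intro p hp
    rw [Set.mem_prod, not_and_or] at hp
    rcases hp with hp | hp
    · simp [Function.uncurry, hF, Set.indicator_of_notMem hp]
    · simp [Function.uncurry, hF, image_eq_zero_of_notMem_tsupport hp]
  have hFint : Integrable (Function.uncurry F) (ν.prod ν) :=
    hFcont.integrable_of_hasCompactSupport hFsupp
  -- Step 1 : iterated integral (p then y) vanishes
  have step1 : ∀ p, ∫ y, F p y ∂ν = 0 := by
    intro p
    have h1 : ∀ y : ℚ_[q] × ℚ_[q],
        g y * χ (p.1 * (y.1 - x.1) + p.2 * (y.2 - x.2))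
          = (g y * χ (-(-p.1 * y.1 + -p.2 * y.2))) * χ (-(p.1 * x.1 + p.2 * x.2)) := by
      intro y
      have harg : p.1 * (y.1 - x.1) + p.2 * (y.2 - x.2)
          = (-(-p.1 * y.1 + -p.2 * y.2)) + (-(p.1 * x.1 + p.2 * x.2)) := by ring
      rw [harg, hχ_mul]; ring
    simp only [hF]
    simp_rw [h1]
    rw [integral_const_mul, integral_mul_const]
    have : ∫ y, g y * χ (-(-p.1 * y.1 + -p.2 * y.2)) ∂ν = qpFourier q μ χ g (-p) := by
      rw [qpFourier]
      rfl
    rw [this, h0, zero_mul, mul_zero]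
  -- Step 2 : swap and compute
  have hswap : ∫ y, (∫ p, F p y ∂ν) ∂ν = 0 := by
    rw [← integral_integral_swap hFint]
    simp_rw [step1]
    simp
  -- compute inner integral over p
  set V : ℂ := ((μ (Bq q m)).toReal : ℂ) with hV
  set D : Set (ℚ_[q] × ℚ_[q]) :=
    {y | ‖y.1 - x.1‖ ≤ (q:ℝ)^(-(m:ℤ)) ∧ ‖y.2 - x.2‖ ≤ (q:ℝ)^(-(m:ℤ))} with hD
  have hinner : ∀ y : ℚ_[q] × ℚ_[q],
      (∫ p, F p y ∂ν) = g y * (V * V) * D.indicator (fun _ => (1:ℂ)) y := by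
    intro y
    have h2 : ∀ p : ℚ_[q] × ℚ_[q], F p y
        = g y * S.indicator (fun p : ℚ_[q] × ℚ_[q] =>
            χ (p.1 * (y.1 - x.1)) * χ (p.2 * (y.2 - x.2))) p := by
      intro p
      simp only [hF]
      by_cases hp : p ∈ S
      · rw [Set.indicator_of_mem hp, Set.indicator_of_mem hp, ← hχ_mul]; ring
      · rw [Set.indicator_of_notMem hp, Set.indicator_of_notMem hp]; ring
    simp_rw [h2]
    rw [integral_const_mul, integral_indicator hSmeas]
    rw [hS, ← Measure.prod_restrict]
    rw [show (∫ p : ℚ_[q] × ℚ_[q], χ (p.1 * (y.1 - x.1)) * χ (p.2 * (y.2 - x.2))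
          ∂((μ.restrict (Bq q (m:ℤ))).prod (μ.restrict (Bq q (m:ℤ)))))
        = (∫ ξ in Bq q (m:ℤ), χ (ξ * (y.1 - x.1)) ∂μ) * (∫ ξ in Bq q (m:ℤ), χ (ξ * (y.2 - x.2)) ∂μ)
      from integral_prod_mul (fun ξ => χ (ξ * (y.1 - x.1))) (fun ξ => χ (ξ * (y.2 - x.2)))]
    rw [integral_char_ball μ hχ_mul hχ_triv hχ_nontriv m (y.1 - x.1),
      integral_char_ball μ hχ_mul hχ_triv hχ_nontriv m (y.2 - x.2)]
    by_cases hy1 : ‖y.1 - x.1‖ ≤ (q:ℝ)^(-(m:ℤ))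
    · by_cases hy2 : ‖y.2 - x.2‖ ≤ (q:ℝ)^(-(m:ℤ))
      · rw [if_pos hy1, if_pos hy2, Set.indicator_of_mem (by exact ⟨hy1, hy2⟩)]
        ring
      · rw [if_neg hy2, Set.indicator_of_notMem (by rw [hD]; exact fun h => hy2 h.2)]
        ring
    · rw [if_neg hy1, Set.indicator_of_notMem (by rw [hD]; exact fun h => hy1 h.1)]
      ring
  -- conclude
  have hDmeas : MeasurableSet D := by
    have : D = (fun y : ℚ_[q] × ℚ_[q] => y - x) ⁻¹' ((Bq q (-(m:ℤ))) ×ˢ (Bq q (-(m:ℤ)))) := by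
      ext y; rfl
    rw [this]
    exact ((measurableSet_Bq _).prod (measurableSet_Bq _)).preimage (by fun_prop)
  have hgD : ∀ y ∈ D, g y = g x := by
    intro y hy
    apply hm x y
    rw [Prod.dist_eq, max_le_iff]
    exact ⟨by rw [dist_eq_norm]; exact hy.1, by rw [dist_eq_norm]; exact hy.2⟩
  have hfinal : (0:ℂ) = (V * V) * (((ν D).toReal : ℂ) * g x) := by
    rw [← hswap]
    have : ∀ y : ℚ_[q] × ℚ_[q], (∫ p, F p y ∂ν)
        = (V * V) * D.indicator (fun y => g y) y := by
      intro y
      rw [hinner y]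
      by_cases hy : y ∈ D
      · rw [Set.indicator_of_mem hy, Set.indicator_of_mem hy]; ring
      · rw [Set.indicator_of_notMem hy, Set.indicator_of_notMem hy]; ring
    simp_rw [this]
    rw [integral_const_mul, integral_indicator hDmeas]
    rw [setIntegral_congr_fun hDmeas hgD, setIntegral_const]
    simp [mul_comm, Measure.real]
  -- nonvanishing of the factors
  have hq0 : (0:ℝ) < q := lt_trans one_pos (hq1 (q := q))
  have hVne : V ≠ 0 := by
    rw [hV]
    simp only [ne_eq, Complex.ofReal_eq_zero]
    have hpos : 0 < μ (Bq q m) :=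
      (isOpen_Bq m).measure_pos μ ⟨0, by simp [Bq]⟩
    have hfin : μ (Bq q m) < ⊤ := (isCompact_Bq m).measure_lt_top
    exact ne_of_gt (ENNReal.toReal_pos (ne_of_gt hpos) (ne_of_lt hfin))
  have hDne : ((ν D).toReal : ℂ) ≠ 0 := by
    simp only [ne_eq, Complex.ofReal_eq_zero]
    have hDopen : IsOpen D := by
      have : D = (fun y : ℚ_[q] × ℚ_[q] => y - x) ⁻¹' ((Bq q (-(m:ℤ))) ×ˢ (Bq q (-(m:ℤ)))) := by
        ext y; rfl
      rw [this]
      exact ((isOpen_Bq _).prod (isOpen_Bq _)).preimage (by fun_prop)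
    have hpos : 0 < ν D := hDopen.measure_pos ν ⟨x, by constructor <;> simp⟩
    have hDcompact : IsCompact D := by
      have : D = (fun z : ℚ_[q] × ℚ_[q] => z + x) '' ((Bq q (-(m:ℤ))) ×ˢ (Bq q (-(m:ℤ)))) := by
        ext y
        constructor
        · intro hy; exact ⟨y - x, hy, by ring⟩
        · rintro ⟨z, hz, rfl⟩
          refine ⟨?_, ?_⟩ <;> simp only [Prod.fst_add, Prod.snd_add, add_sub_cancel_right]
          exacts [hz.1, hz.2]
      rw [this]
      exact (((isCompact_Bq _).prod (isCompact_Bq _)).image (by fun_prop))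
    exact ne_of_gt (ENNReal.toReal_pos (ne_of_gt hpos) (ne_of_lt hDcompact.measure_lt_top))
  have := hfinal.symm
  rcases mul_eq_zero.mp this with h | h
  · exact absurd h (mul_ne_zero hVne hVne)
  · rcases mul_eq_zero.mp h with h' | h'
    · exact absurd h' hDne
    · exact h'
end aux4

section aux5
variable {q : ℕ} [Fact q.Prime]

lemma padic_sub_le (x y : ℚ_[q]) : ‖x - y‖ ≤ max ‖x‖ ‖y‖ := by
  rw [sub_eq_add_neg]
  simpa using Padic.nonarchimedean x (-y)

lemma mem_translateT_iff {A : ℕ} {a : ℚ_[q]} {v w : ℚ_[q] × ℚ_[q]} :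
    w ∈ translateT q A a v ↔
      ‖(w.1 - v.1) + 2*a*(w.2 - v.2)‖ ≤ (q:ℝ)^(A:ℤ) ∧
        ‖w.2 - v.2‖ ≤ (q:ℝ)^((2*A:ℕ):ℤ) := Iff.rfl

lemma self_mem_translateT {A : ℕ} {a : ℚ_[q]} (v : ℚ_[q] × ℚ_[q]) :
    v ∈ translateT q A a v := by
  have hq0 : (0:ℝ) < q := lt_trans one_pos (hq1 (q := q))
  rw [mem_translateT_iff]
  refine ⟨by simpa using by positivity, by simpa using by positivity⟩

lemma translateT_eq_of_mem {A : ℕ} {a : ℚ_[q]} {v x : ℚ_[q] × ℚ_[q]}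
    (h : x ∈ translateT q A a v) : translateT q A a v = translateT q A a x := by
  rw [mem_translateT_iff] at h
  ext w
  rw [mem_translateT_iff, mem_translateT_iff]
  constructor
  · rintro ⟨h1, h2⟩
    refine ⟨?_, ?_⟩
    · have e : (w.1 - x.1) + 2*a*(w.2 - x.2)
          = ((w.1 - v.1) + 2*a*(w.2 - v.2)) - ((x.1 - v.1) + 2*a*(x.2 - v.2)) := by ring
      rw [e]
      exact le_trans (padic_sub_le _ _) (max_le h1 h.1)
    · have e : w.2 - x.2 = (w.2 - v.2) - (x.2 - v.2) := by ring
      rw [e]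
      exact le_trans (padic_sub_le _ _) (max_le h2 h.2)
  · rintro ⟨h1, h2⟩
    refine ⟨?_, ?_⟩
    · have e : (w.1 - v.1) + 2*a*(w.2 - v.2)
          = ((w.1 - x.1) + 2*a*(w.2 - x.2)) + ((x.1 - v.1) + 2*a*(x.2 - v.2)) := by ring
      rw [e]
      exact le_trans (Padic.nonarchimedean _ _) (max_le h1 h.1)
    · have e : w.2 - v.2 = (w.2 - x.2) + (x.2 - v.2) := by ring
      rw [e]
      exact le_trans (Padic.nonarchimedean _ _) (max_le h2 h.2)

lemma translateT_as_preimage (A : ℕ) (a : ℚ_[q]) (v : ℚ_[q] × ℚ_[q]) :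
    translateT q A a v
      = ((fun w : ℚ_[q] × ℚ_[q] => (w.1 - v.1) + 2*a*(w.2 - v.2)) ⁻¹' Bq q (A:ℤ)) ∩
        ((fun w : ℚ_[q] × ℚ_[q] => w.2 - v.2) ⁻¹' Bq q ((2*A:ℕ):ℤ)) := rfl

lemma isOpen_translateT (A : ℕ) (a : ℚ_[q]) (v : ℚ_[q] × ℚ_[q]) :
    IsOpen (translateT q A a v) := by
  rw [translateT_as_preimage]
  exact ((isOpen_Bq _).preimage (by fun_prop)).inter ((isOpen_Bq _).preimage (by fun_prop))

lemma isClosed_translateT (A : ℕ) (a : ℚ_[q]) (v : ℚ_[q] × ℚ_[q]) :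
    IsClosed (translateT q A a v) := by
  rw [translateT_as_preimage]
  exact ((isClosed_Bq _).preimage (by fun_prop)).inter ((isClosed_Bq _).preimage (by fun_prop))

lemma isCompact_translateT (A : ℕ) (a : ℚ_[q]) (v : ℚ_[q] × ℚ_[q]) :
    IsCompact (translateT q A a v) := by
  set C : ℝ := max ((q:ℝ)^(A:ℤ)) (max (‖(2*a : ℚ_[q])‖ * (q:ℝ)^((2*A:ℕ):ℤ)) ((q:ℝ)^((2*A:ℕ):ℤ)))
  apply IsCompact.of_isClosed_subset (isCompact_closedBall v C) (isClosed_translateT A a v)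
  intro w hw
  rw [mem_translateT_iff] at hw
  rw [Metric.mem_closedBall, Prod.dist_eq, max_le_iff]
  constructor
  · rw [dist_eq_norm]
    have e : w.1 - v.1 = ((w.1 - v.1) + 2*a*(w.2 - v.2)) - (2*a*(w.2 - v.2)) := by ring
    rw [e]
    refine le_trans (padic_sub_le _ _) (max_le (le_trans hw.1 (le_max_left _ _)) ?_)
    refine le_trans ?_ (le_trans (le_max_left _ _) (le_max_right _ _))
    rw [norm_mul]
    exact mul_le_mul_of_nonneg_left hw.2 (norm_nonneg _)
  · rw [dist_eq_norm]
    exact le_trans hw.2 (le_trans (le_trans (le_max_right _ _) (le_max_right _ _)) le_rfl)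

lemma measurableSet_translateT (A : ℕ) (a : ℚ_[q]) (v : ℚ_[q] × ℚ_[q]) :
    MeasurableSet (translateT q A a v) := (isClosed_translateT A a v).measurableSet
end aux5

/-- **Wave packet decomposition.** If `f` is Schwartz with Fourier support in the
`R^{-1}`-neighbourhood of the parabola over an interval `I` of length `R^{-1/2}` (`R = q^{2A}`),
then `|f| = ∑_{T' ∈ 𝕋(I)} c_{T'} 1_{T'}` for nonnegative constants `c_{T'}` indexed by the
translates of the dual parallelogram `T`, and `∫ |f|² = ∑_{T'} c_{T'}² μ²(T')`. -/
theorem wave_packet_decomposition (q : ℕ) [Fact q.Prime] (hq2 : q ≠ 2)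
    (μ : Measure ℚ_[q]) [μ.IsAddHaarMeasure] [SigmaFinite μ]
    (hμ : μ {x : ℚ_[q] | ‖x‖ ≤ 1} = 1)
    (χ : ℚ_[q] → ℂ)
    (hχ_mul : ∀ x y : ℚ_[q], χ (x + y) = χ x * χ y)
    (hχ_norm : ∀ x : ℚ_[q], ‖χ x‖ = 1)
    (hχ_triv : ∀ x : ℚ_[q], ‖x‖ ≤ 1 → χ x = 1)
    (hχ_nontriv : ∃ x : ℚ_[q], ‖x‖ ≤ (q : ℝ) ∧ χ x ≠ 1)
    (A : ℕ) (hA : 1 ≤ A) (a₀ a : ℚ_[q]) (ha₀ : ‖a₀‖ ≤ 1) (ha : ‖a - a₀‖ ≤ (q : ℝ) ^ (-(A : ℤ)))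
    (f : ℚ_[q] × ℚ_[q] → ℂ) (hf_lc : IsLocallyConstant f) (hf_supp : HasCompactSupport f)
    (hFT : ∀ p : ℚ_[q] × ℚ_[q],
      ¬ (‖p.1 - a₀‖ ≤ (q : ℝ) ^ (-(A : ℤ)) ∧ ‖p.2 - p.1 ^ 2‖ ≤ (q : ℝ) ^ (-((2 * A : ℕ) : ℤ))) →
      qpFourier q μ χ f p = 0) :
    ∃ c : {S : Set (ℚ_[q] × ℚ_[q]) // ∃ v, S = translateT q A a v} → ℝ,
      (∀ T', 0 ≤ c T') ∧
      (∀ x : ℚ_[q] × ℚ_[q],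
        ‖f x‖ = ∑' T' : {S : Set (ℚ_[q] × ℚ_[q]) // ∃ v, S = translateT q A a v},
          c T' * Set.indicator T'.1 (fun _ => (1 : ℝ)) x) ∧
      ∫ x, ‖f x‖ ^ 2 ∂(μ.prod μ)
        = ∑' T' : {S : Set (ℚ_[q] × ℚ_[q]) // ∃ v, S = translateT q A a v},
            c T' ^ 2 * ((μ.prod μ) T'.1).toReal := by
  classical
  set ν := μ.prod μ with hν
  have hq0 : (0:ℝ) < q := lt_trans one_pos (hq1 (q := q))
  have hfcont : Continuous f := hf_lc.continuous
  have hχcont : Continuous χ := chi_cont hχ_mul hχ_triv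
  -- Step C : |f| is constant on each translate
  have hmod : ∀ v x : ℚ_[q] × ℚ_[q], x ∈ translateT q A a v → ‖f x‖ = ‖f v‖ := by
    intro v x hx
    set t : ℚ_[q] × ℚ_[q] := x - v with htdef
    have ht1 : ‖t.1 + 2*a*t.2‖ ≤ (q:ℝ)^(A:ℤ) := hx.1
    have ht2 : ‖t.2‖ ≤ (q:ℝ)^((2*A:ℕ):ℤ) := hx.2
    set ct : ℂ := χ (a * t.1 + a^2 * t.2) with hct
    set g : ℚ_[q] × ℚ_[q] → ℂ := fun z => f (z + t) - ct * f z with hg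
    have hg_lc : IsLocallyConstant g := by
      have h1 : IsLocallyConstant (fun z : ℚ_[q] × ℚ_[q] => f (z + t)) :=
        hf_lc.comp_continuous (by fun_prop)
      exact (h1.prodMk hf_lc).comp (fun p : ℂ × ℂ => p.1 - ct * p.2)
    have hg_supp : HasCompactSupport g := by
      apply HasCompactSupport.intro
        ((hf_supp.isCompact.image (by fun_prop : Continuous
          (fun z : ℚ_[q] × ℚ_[q] => z - t))).union hf_supp.isCompact)
      intro z hz
      rw [Set.mem_union] at hz
      push_neg at hz
      have h1 : f (z + t) = 0 := by
        by_contra h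
        exact hz.1 ⟨z + t, subset_tsupport f h, by ring⟩
      have h2 : f z = 0 := by
        by_contra h
        exact hz.2 (subset_tsupport f h)
      simp [hg, h1, h2]
    have hg_ft : ∀ p, qpFourier q μ χ g p = 0 := by
      intro p
      have hint2 : Integrable (fun z : ℚ_[q] × ℚ_[q] =>
          f z * χ (-(p.1 * z.1 + p.2 * z.2))) ν := by
        apply Continuous.integrable_of_hasCompactSupport (by fun_prop)
        exact hf_supp.mul_right
      have hint1 : Integrable (fun z : ℚ_[q] × ℚ_[q] =>
          f (z + t) * χ (-(p.1 * z.1 + p.2 * z.2))) ν := by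
        apply Continuous.integrable_of_hasCompactSupport (by fun_prop)
        apply HasCompactSupport.intro
          (hf_supp.isCompact.image (by fun_prop : Continuous
            (fun z : ℚ_[q] × ℚ_[q] => z - t)))
        intro z hz
        have h1 : f (z + t) = 0 := by
          by_contra h
          exact hz ⟨z + t, subset_tsupport f h, by ring⟩
        simp [h1]
      have expand : qpFourier q μ χ g p
          = χ (p.1 * t.1 + p.2 * t.2) * qpFourier q μ χ f p - ct * qpFourier q μ χ f p := by
        rw [qpFourier]
        have : ∀ z : ℚ_[q] × ℚ_[q], g z * χ (-(p.1 * z.1 + p.2 * z.2))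
            = f (z + t) * χ (-(p.1 * z.1 + p.2 * z.2))
              - ct * (f z * χ (-(p.1 * z.1 + p.2 * z.2))) := by
          intro z; rw [hg]; ring
        simp_rw [this]
        rw [integral_sub hint1 (hint2.const_mul ct), integral_const_mul]
        congr 1
        · -- translation
          set G : ℚ_[q] × ℚ_[q] → ℂ := fun z =>
            f z * (χ (-(p.1 * z.1 + p.2 * z.2)) * χ (p.1 * t.1 + p.2 * t.2)) with hG
          have hGz : ∀ z : ℚ_[q] × ℚ_[q],
              f (z + t) * χ (-(p.1 * z.1 + p.2 * z.2)) = G (z + t) := by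
            intro z
            simp only [hG]
            have harg : (-(p.1 * (z + t).1 + p.2 * (z + t).2)) + (p.1 * t.1 + p.2 * t.2)
                = -(p.1 * z.1 + p.2 * z.2) := by
              simp only [Prod.fst_add, Prod.snd_add]; ring
            rw [← hχ_mul, harg]
          simp_rw [hGz]
          rw [integral_add_right_eq_self G t, hG]
          simp_rw [show ∀ z : ℚ_[q] × ℚ_[q],
            f z * (χ (-(p.1 * z.1 + p.2 * z.2)) * χ (p.1 * t.1 + p.2 * t.2))
              = (f z * χ (-(p.1 * z.1 + p.2 * z.2))) * χ (p.1 * t.1 + p.2 * t.2)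
            from fun z => by ring]
          rw [integral_mul_const, qpFourier]
          ring
      rw [expand]
      by_cases hfp : qpFourier q μ χ f p = 0
      · rw [hfp]; ring
      · have hsupp := not_imp_not.mpr (hFT p) hfp
        push_neg at hsupp
        obtain ⟨hp1, hp2⟩ := Classical.not_not.mp (by
          intro hcon
          exact hfp (hFT p hcon))
        -- show the two characters agree
        have hpa : ‖p.1 - a‖ ≤ (q:ℝ)^(-(A:ℤ)) := by
          have e : p.1 - a = (p.1 - a₀) - (a - a₀) := by ring
          rw [e]
          exact le_trans (padic_sub_le _ _) (max_le hp1 ha)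
        have hAA : (q:ℝ)^(-(A:ℤ)) * (q:ℝ)^(A:ℤ) = 1 := by
          rw [← zpow_add₀ (ne_of_gt hq0)]; simp
        have hA2 : (q:ℝ)^(-((2*A:ℕ):ℤ)) * (q:ℝ)^((2*A:ℕ):ℤ) = 1 := by
          rw [← zpow_add₀ (ne_of_gt hq0)]; simp
        have hAsq : (q:ℝ)^(-(A:ℤ)) * (q:ℝ)^(-(A:ℤ)) = (q:ℝ)^(-((2*A:ℕ):ℤ)) := by
          rw [← zpow_add₀ (ne_of_gt hq0)]
          congr 1
          push_cast
          ring
        have hd : ‖(p.1 * t.1 + p.2 * t.2) - (a * t.1 + a^2 * t.2)‖ ≤ 1 := by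
          have e : (p.1 * t.1 + p.2 * t.2) - (a * t.1 + a^2 * t.2)
              = (p.1 - a) * (t.1 + 2*a*t.2) + ((p.1 - a) * (p.1 - a) * t.2
                + (p.2 - p.1^2) * t.2) := by ring
          rw [e]
          refine le_trans (Padic.nonarchimedean _ _) (max_le ?_ ?_)
          · rw [norm_mul]
            calc ‖p.1 - a‖ * ‖t.1 + 2*a*t.2‖ ≤ (q:ℝ)^(-(A:ℤ)) * (q:ℝ)^(A:ℤ) :=
                  mul_le_mul hpa ht1 (norm_nonneg _) (le_of_lt (zpow_pos hq0 _))
              _ = 1 := hAA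
          · refine le_trans (Padic.nonarchimedean _ _) (max_le ?_ ?_)
            · rw [norm_mul, norm_mul]
              calc ‖p.1 - a‖ * ‖p.1 - a‖ * ‖t.2‖
                  ≤ ((q:ℝ)^(-(A:ℤ)) * (q:ℝ)^(-(A:ℤ))) * (q:ℝ)^((2*A:ℕ):ℤ) := by
                    apply mul_le_mul _ ht2 (norm_nonneg _) (by positivity)
                    exact mul_le_mul hpa hpa (norm_nonneg _) (le_of_lt (zpow_pos hq0 _))
                _ = 1 := by rw [hAsq]; exact hA2
            · rw [norm_mul]
              calc ‖p.2 - p.1^2‖ * ‖t.2‖ ≤ (q:ℝ)^(-((2*A:ℕ):ℤ)) * (q:ℝ)^((2*A:ℕ):ℤ) :=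
                    mul_le_mul hp2 ht2 (norm_nonneg _) (le_of_lt (zpow_pos hq0 _))
                _ = 1 := hA2
        have : χ (p.1 * t.1 + p.2 * t.2) = ct := chi_sub hχ_mul hχ_triv hd
        rw [this]; ring
    have hgv := fourier_injective μ hχ_mul hχ_triv hχ_nontriv hg_lc hg_supp hg_ft v
    have hvt : v + t = x := by rw [htdef]; ring
    have hfx : f x = ct * f v := by
      have := sub_eq_zero.mp hgv
      rwa [hvt] at this
    rw [hfx, norm_mul, hct, hχ_norm, one_mul]
  -- index type
  set Idx := {S : Set (ℚ_[q] × ℚ_[q]) // ∃ v, S = translateT q A a v} with hIdx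
  set mk : (ℚ_[q] × ℚ_[q]) → Idx := fun x => ⟨translateT q A a x, ⟨x, rfl⟩⟩ with hmk
  set c : Idx → ℝ := fun T' => ‖f (Classical.choose T'.2)‖ with hc
  have hc_eq : ∀ (x : ℚ_[q] × ℚ_[q]) (T' : Idx), x ∈ T'.1 → c T' = ‖f x‖ := by
    intro x T' hx
    have hspec := Classical.choose_spec T'.2
    rw [hspec] at hx
    exact (hmod _ x hx).symm
  have huniq : ∀ (x : ℚ_[q] × ℚ_[q]) (T' : Idx), x ∈ T'.1 → T' = mk x := by
    intro x T' hx
    apply Subtype.ext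
    have hspec := Classical.choose_spec T'.2
    rw [hspec] at hx ⊢
    exact translateT_eq_of_mem hx
  refine ⟨c, fun T' => norm_nonneg _, ?_, ?_⟩
  · -- pointwise identity
    intro x
    rw [tsum_eq_single (mk x) ?_]
    · rw [Set.indicator_of_mem (self_mem_translateT x), hc_eq x (mk x) (self_mem_translateT x),
        mul_one]
    · intro T' hT'
      by_cases hx : x ∈ T'.1
      · exact absurd (huniq x T' hx) hT'
      · rw [Set.indicator_of_notMem hx, mul_zero]
  · -- integral identity
    have hcover : tsupport f ⊆ ⋃ x : tsupport f, translateT q A a ↑x := by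
      intro x hx
      exact Set.mem_iUnion.mpr ⟨⟨x, hx⟩, self_mem_translateT x⟩
    obtain ⟨t, ht⟩ := hf_supp.elim_finite_subcover
      (fun x : tsupport f => translateT q A a ↑x)
      (fun x => isOpen_translateT A a ↑x) hcover
    set Fn : Finset Idx := t.image (fun x : ↥(tsupport f) => mk (x : ℚ_[q] × ℚ_[q])) with hFn
    have hzero : ∀ T' : Idx, T' ∉ Fn → c T' = 0 := by
      intro T' hT'
      by_contra hcne
      have hv' : f (Classical.choose T'.2) ≠ 0 := by
        intro h
        apply hcne
        show ‖f (Classical.choose T'.2)‖ = 0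
        rw [h, norm_zero]
      have hvK : Classical.choose T'.2 ∈ tsupport f := subset_tsupport f hv'
      obtain ⟨i, hi⟩ := Set.mem_iUnion.mp (ht hvK)
      simp only [Set.mem_iUnion] at hi
      obtain ⟨hit, hmem⟩ := hi
      apply hT'
      have heq : mk (↑i : ℚ_[q] × ℚ_[q]) = T' := by
        apply Subtype.ext
        show translateT q A a ↑i = T'.1
        rw [Classical.choose_spec T'.2]
        exact translateT_eq_of_mem hmem
      simp only [hFn, Finset.mem_image]
      exact ⟨i, hit, heq⟩
    have hpt : ∀ x : ℚ_[q] × ℚ_[q],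
        ‖f x‖^2 = ∑ T' ∈ Fn, (c T')^2 * Set.indicator T'.1 (fun _ => (1:ℝ)) x := by
      intro x
      by_cases hx : ∃ T' ∈ Fn, x ∈ T'.1
      · obtain ⟨T', hT'Fn, hxT'⟩ := hx
        rw [Finset.sum_eq_single T']
        · rw [Set.indicator_of_mem hxT', hc_eq x T' hxT', mul_one]
        · intro T'' hT''Fn hne
          by_cases hx2 : x ∈ T''.1
          · exact absurd ((huniq x T'' hx2).trans (huniq x T' hxT').symm) hne
          · rw [Set.indicator_of_notMem hx2, mul_zero]
        · intro h; exact absurd hT'Fn h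
      · push_neg at hx
        have hfx : f x = 0 := by
          by_contra h
          obtain ⟨i, hi⟩ := Set.mem_iUnion.mp (ht (subset_tsupport f h))
          simp only [Set.mem_iUnion] at hi
          obtain ⟨hit, hmem⟩ := hi
          refine (hx (mk ↑i) ?_) hmem
          simp only [hFn, Finset.mem_image]
          exact ⟨i, hit, rfl⟩
        rw [hfx]
        rw [Finset.sum_congr rfl (fun T' hT' => by
          rw [Set.indicator_of_notMem (fun hm => (hx T' hT') hm), mul_zero])]
        rw [norm_zero, Finset.sum_const_zero]
        norm_num
    have hint : ∀ T' : Idx, Integrable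
        (fun x => (c T')^2 * Set.indicator T'.1 (fun _ => (1:ℝ)) x) ν := by
      intro T'
      obtain ⟨v, hv⟩ := T'.2
      apply Integrable.const_mul
      rw [integrable_indicator_iff (by rw [hv]; exact measurableSet_translateT A a v)]
      apply (integrableOn_const_iff (C := (1:ℝ))).mpr
      right
      rw [hv]
      exact (isCompact_translateT A a v).measure_lt_top
    calc ∫ x, ‖f x‖ ^ 2 ∂ν
        = ∫ x, ∑ T' ∈ Fn, (c T')^2 * Set.indicator T'.1 (fun _ => (1:ℝ)) x ∂ν := by
          rw [show (fun x => ‖f x‖^2)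
            = fun x => ∑ T' ∈ Fn, (c T')^2 * Set.indicator T'.1 (fun _ => (1:ℝ)) x
            from funext hpt]
      _ = ∑ T' ∈ Fn, ∫ x, (c T')^2 * Set.indicator T'.1 (fun _ => (1:ℝ)) x ∂ν :=
          integral_finset_sum Fn (fun T' _ => hint T')
      _ = ∑ T' ∈ Fn, (c T')^2 * (ν T'.1).toReal := by
          apply Finset.sum_congr rfl
          intro T' _
          obtain ⟨v, hv⟩ := T'.2
          have hmeas : MeasurableSet T'.1 := by
            rw [hv]; exact measurableSet_translateT A a v
          rw [integral_const_mul, integral_indicator hmeas, setIntegral_const]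
          simp [Measure.real]
      _ = ∑' T' : Idx, (c T')^2 * (ν T'.1).toReal := by
          rw [tsum_eq_sum (fun T' hT' => by rw [hzero T' hT']; ring)]
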